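/- Let G be a graph on vertex set {1,…,N}, k ≥ 2, p_v = (v,v²), Q = conv{p_v}, Y = Q^k, and for each pair i < j and each forbidden pair (u,v) (meaning u = v or {u,v} ∉ E(G)) let F_{i,j,u,v} ⊆ Y be the face of Y obtained by fixing block i to p_u and block j to p_v. Let X = conv(⋃ F_{i,j,u,v}). Then X = Y if and only if G has no k-clique (counting tuples: a tuple (v_1,…,v_k) is a clique iff no pair (v_i,v_j) with i<j is forbidden). -/

import Mathlib

open scoped RealInnerProductSpace

noncomputable section

abbrev E2 := EuclideanSpace ℝ (Fin 2)

def momentPt (v : ℤ) : E2 := (WithLp.equiv 2 (Fin 2 → ℝ)).symm ![(v : ℝ), (v : ℝ) ^ 2]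

lemma momentPt_apply0 (v : ℤ) : momentPt v 0 = (v : ℝ) := by
  simp [momentPt, WithLp.equiv_symm_apply]

lemma momentPt_apply1 (v : ℤ) : momentPt v 1 = (v : ℝ) ^ 2 := by
  simp [momentPt, WithLp.equiv_symm_apply]

lemma lin_aux (a : ℝ) : IsLinearMap ℝ (fun x : E2 => 2 * a * x 0 - x 1) := by
  constructor
  · intro x y; simp only [PiLp.add_apply]; ring
  · intro c x; simp only [PiLp.smul_apply, smul_eq_mul]; ring

/-- the moment functional bound on the hull -/
lemma key_le {N : ℕ} (p : Fin N → E2) (hp : ∀ v : Fin N, p v = momentPt ((v : ℕ) + 1))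
    (u : Fin N) {x : E2} (hx : x ∈ convexHull ℝ (Set.range p)) :
    2 * ((u : ℕ) + 1 : ℝ) * x 0 - x 1 ≤ ((u : ℕ) + 1 : ℝ) ^ 2 := by
  have hconv : Convex ℝ {y : E2 | 2 * ((u : ℕ) + 1 : ℝ) * y 0 - y 1 ≤ ((u : ℕ) + 1 : ℝ) ^ 2} :=
    convex_halfSpace_le (lin_aux _) _
  refine convexHull_min ?_ hconv hx
  rintro y ⟨v, rfl⟩
  have h0 : p v 0 = ((v : ℕ) + 1 : ℝ) := by
    rw [hp, momentPt_apply0]; push_cast; ring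
  have h1 : p v 1 = ((v : ℕ) + 1 : ℝ) ^ 2 := by
    rw [hp, momentPt_apply1]; push_cast; ring
  show 2 * ((u : ℕ) + 1 : ℝ) * p v 0 - p v 1 ≤ _
  rw [h0, h1]
  nlinarith [sq_nonneg (((u : ℕ) + 1 : ℝ) - ((v : ℕ) + 1 : ℝ))]

lemma key_lt {N : ℕ} (p : Fin N → E2) (hp : ∀ v : Fin N, p v = momentPt ((v : ℕ) + 1))
    {u w : Fin N} (huw : u ≠ w) :
    2 * ((u : ℕ) + 1 : ℝ) * p w 0 - p w 1 < ((u : ℕ) + 1 : ℝ) ^ 2 := by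
  have h0 : p w 0 = ((w : ℕ) + 1 : ℝ) := by
    rw [hp, momentPt_apply0]; push_cast; ring
  have h1 : p w 1 = ((w : ℕ) + 1 : ℝ) ^ 2 := by
    rw [hp, momentPt_apply1]; push_cast; ring
  have hne : ((u : ℕ) + 1 : ℝ) ≠ ((w : ℕ) + 1 : ℝ) := by
    intro h
    exact huw (Fin.ext (by exact_mod_cast (by linarith : ((u : ℕ) : ℝ) = ((w : ℕ) : ℝ))))
  have : (0 : ℝ) < (((u : ℕ) + 1 : ℝ) - ((w : ℕ) + 1 : ℝ)) ^ 2 :=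
    sq_pos_of_ne_zero (sub_ne_zero.mpr hne)
  rw [h0, h1]; nlinarith

/-- The clique polytope gadget: with `Y = Q^k` and `X` the convex hull of the union of
the forbidden-pair faces, `X = Y` iff the graph has no `k`-clique tuple. -/
theorem clique_polytope_gadget (N k : ℕ) (hk : 2 ≤ k)
    (G : SimpleGraph (Fin N))
    (p : Fin N → E2) (hp : ∀ v : Fin N, p v = momentPt ((v : ℕ) + 1))
    (Q : Set E2) (hQ : Q = convexHull ℝ (Set.range p))
    (Y : Set (PiLp 2 fun _ : Fin k => E2))
    (hY : Y = {z | ∀ r, z r ∈ Q})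
    (F : Fin k → Fin k → Fin N → Fin N → Set (PiLp 2 fun _ : Fin k => E2))
    (hF : ∀ i j u v, F i j u v = {z | z i = p u ∧ z j = p v ∧ ∀ r, z r ∈ Q})
    (X : Set (PiLp 2 fun _ : Fin k => E2))
    (hX : X = convexHull ℝ
      (⋃ (i : Fin k) (j : Fin k) (_ : i < j) (u : Fin N) (v : Fin N)
        (_ : u = v ∨ ¬ G.Adj u v), F i j u v)) :
    X = Y ↔ ¬ ∃ t : Fin k → Fin N, ∀ i j : Fin k, i < j → G.Adj (t i) (t j) := by
  subst hQ hY hX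
  constructor
  · -- X = Y → no clique
    intro hXY
    rintro ⟨t, ht⟩
    set a : Fin k → ℝ := fun r => ((t r : ℕ) + 1 : ℝ) with ha
    set Φ : (PiLp 2 fun _ : Fin k => E2) → ℝ :=
      fun w => ∑ r : Fin k, (2 * a r * w r 0 - w r 1) with hΦ
    have hΦlin : IsLinearMap ℝ Φ := by
      constructor
      · intro x y
        rw [hΦ, ← Finset.sum_add_distrib]
        refine Finset.sum_congr rfl fun r _ => ?_
        simp only [PiLp.add_apply]; ring
      · intro c x
        simp only [hΦ, smul_eq_mul, Finset.mul_sum]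
        refine Finset.sum_congr rfl fun r _ => ?_
        simp only [PiLp.smul_apply, smul_eq_mul]; ring
    set M : ℝ := ∑ r : Fin k, (a r) ^ 2 with hM
    -- the clique vertex
    set z : PiLp 2 (fun _ : Fin k => E2) := WithLp.toLp 2 (fun r => p (t r)) with hz
    have hzY : z ∈ {w : PiLp 2 (fun _ : Fin k => E2) | ∀ r, w r ∈ convexHull ℝ (Set.range p)} :=
      fun r => subset_convexHull ℝ _ ⟨t r, rfl⟩
    have hΦz : Φ z = M := by
      rw [hΦ, hM]
      refine Finset.sum_congr rfl fun r _ => ?_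
      have h0 : p (t r) 0 = a r := by rw [hp, momentPt_apply0, ha]; push_cast; ring
      have h1 : p (t r) 1 = (a r) ^ 2 := by rw [hp, momentPt_apply1, ha]; push_cast; ring
      show 2 * a r * p (t r) 0 - p (t r) 1 = _
      rw [h0, h1]; ring
    -- X is in the open halfspace Φ < M
    have hXlt : ∀ w ∈ convexHull ℝ
        (⋃ (i : Fin k) (j : Fin k) (_ : i < j) (u : Fin N) (v : Fin N)
          (_ : u = v ∨ ¬ G.Adj u v), F i j u v), Φ w < M := by
      intro w hw
      have hconv : Convex ℝ {w : PiLp 2 (fun _ : Fin k => E2) | Φ w < M} :=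
        convex_halfSpace_lt hΦlin _
      refine convexHull_min ?_ hconv hw
      clear hw w
      intro w hw
      simp only [Set.mem_iUnion] at hw
      obtain ⟨i, j, hij, u, v, huv, hwF⟩ := hw
      rw [hF] at hwF
      obtain ⟨hwi, hwj, hwQ⟩ := hwF
      show Φ w < M
      rw [hΦ, hM]
      -- not both u = t i and v = t j
      have hor : u ≠ t i ∨ v ≠ t j := by
        by_contra h
        push_neg at h
        obtain ⟨h1, h2⟩ := h
        subst h1; subst h2
        have hadj := ht i j hij
        rcases huv with h3 | h3
        · exact G.irrefl (h3 ▸ hadj)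
        · exact h3 hadj
      have hle : ∀ r ∈ Finset.univ, 2 * a r * w r 0 - w r 1 ≤ (a r) ^ 2 :=
        fun r _ => key_le p hp (t r) (hwQ r)
      rcases hor with hne | hne
      · refine Finset.sum_lt_sum hle ⟨i, Finset.mem_univ i, ?_⟩
        rw [hwi]
        exact key_lt p hp (Ne.symm hne)
      · refine Finset.sum_lt_sum hle ⟨j, Finset.mem_univ j, ?_⟩
        rw [hwj]
        exact key_lt p hp (Ne.symm hne)
    have := hXlt z (hXY ▸ hzY)
    rw [hΦz] at this
    exact lt_irrefl _ this
  · -- no clique → X = Y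
    intro hnc
    apply Set.Subset.antisymm
    · -- X ⊆ Y
      refine convexHull_min ?_ ?_
      · intro w hw
        simp only [Set.mem_iUnion] at hw
        obtain ⟨i, j, _, u, v, _, hwF⟩ := hw
        rw [hF] at hwF
        exact hwF.2.2
      · intro x hx y hy s c hs hc hsc
        intro r
        have := (convex_convexHull ℝ (Set.range p)) (hx r) (hy r) hs hc hsc
        simpa only [PiLp.add_apply, PiLp.smul_apply] using this
    · -- Y ⊆ X
      intro z hz
      have hz' : WithLp.ofLp z ∈ convexHull ℝ (Set.univ.pi fun _ : Fin k => Set.range p) :=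
        mem_convexHull_pi fun r _ => hz r
      refine convexHull_min ?_ ((convex_convexHull ℝ _).linear_preimage
        (WithLp.linearEquiv 2 ℝ (Fin k → E2)).symm.toLinearMap) hz'
      intro w hw
      have hw' : ∀ r, ∃ u : Fin N, p u = w r := fun r => (hw r (Set.mem_univ r))
      choose t htw using hw'
      have : ¬ ∀ i j : Fin k, i < j → G.Adj (t i) (t j) := fun h => hnc ⟨t, h⟩
      push_neg at this
      obtain ⟨i, j, hij, hnadj⟩ := this
      apply subset_convexHull ℝ _
      simp only [Set.mem_iUnion]
      refine ⟨i, j, hij, t i, t j, Or.inr hnadj, ?_⟩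
      rw [hF]
      exact ⟨(htw i).symm, (htw j).symm,
        fun r => subset_convexHull ℝ _ (((htw r) ▸ Set.mem_range_self (t r) : w r ∈ Set.range p))⟩
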